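/- Let φ=sup_n φ_n be the potential constructed from the subshifts X_n with constants c_n and the decreasing sequence δ_j=(10+3 log₂ j)/(α j), where 0<α<β_1. Then for every n∈ℕ the restriction of φ to X_n is constantly equal to c_n. -/

import Mathlib

open MeasureTheory Real Filter Topology

noncomputable section

namespace PhaseTransitions

/-! ### Measure-theoretic entropy and topological pressure -/

/-- Base-2 entropy of the (finite, measurable) partition of `X` induced by an
observable `f : X → F` with finitely many values. -/
def entOfObs {X F : Type*} [MeasurableSpace X] [Fintype F]
    (μ : Measure X) (f : X → F) : ℝ :=
  ∑ a : F, -((μ (f ⁻¹' {a})).toReal * Real.logb 2 (μ (f ⁻¹' {a})).toReal)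

/-- Entropy of the transformation `T` with respect to the partition induced by
the observable `f` : the limit (= infimum) of `(1/n) H(⋁_{i<n} T⁻ⁱ f)`. -/
def entObsT {X F : Type*} [MeasurableSpace X] [Fintype F]
    (T : X → X) (μ : Measure X) (f : X → F) : ℝ :=
  ⨅ n : ℕ, entOfObs μ (fun x => fun i : Fin (n + 1) => f (T^[(i : ℕ)] x)) / (n + 1)

/-- Kolmogorov–Sinai (measure-theoretic) entropy, base 2: supremum over all
finite measurable partitions (encoded by observables with values in `Fin k`). -/
def kolSinai {X : Type*} [MeasurableSpace X] (T : X → X) (μ : Measure X) : ℝ :=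
  ⨆ k : ℕ, ⨆ f : {f : X → Fin k // Measurable f}, entObsT T μ f.1

/-- `μ` is a `T`-invariant Borel probability measure. -/
def InvProb {X : Type*} [MeasurableSpace X] (T : X → X) (μ : Measure X) : Prop :=
  IsProbabilityMeasure μ ∧ MeasurePreserving T μ μ

/-- Topological pressure, via the variational principle. -/
def pressure {X : Type*} [MeasurableSpace X] (T : X → X) (φ : X → ℝ) : ℝ :=
  ⨆ μ : {μ : Measure X // InvProb T μ}, (kolSinai T μ.1 + ∫ x, φ x ∂μ.1)

/-- An equilibrium state of the potential `φ`: an invariant probability measure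
attaining the supremum in the variational principle. -/
def IsEquilibrium {X : Type*} [MeasurableSpace X] (T : X → X) (φ : X → ℝ)
    (μ : Measure X) : Prop :=
  InvProb T μ ∧ kolSinai T μ + ∫ x, φ x ∂μ = pressure T φ

/-! ### The two-sided full shift on two symbols -/

/-- The two-sided full shift space `{0,1}^ℤ`. -/
abbrev Bin : Type := ℤ → Bool

/-- The (left) shift map. -/
def shift (x : Bin) : Bin := fun n => x (n + 1)

/-- `x` is a bi-infinite free concatenation of words from `W`: there is a
bi-infinite increasing sequence of cut points, cofinal in both directions, such
that consecutive cut points delimit words of `W`. -/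
def IsFreeConcat (W : Set (List Bool)) (x : Bin) : Prop :=
  ∃ t : ℤ → ℤ, StrictMono t ∧ (∀ N : ℤ, ∃ k, N < t k) ∧ (∀ N : ℤ, ∃ k, t k < N) ∧
    ∀ k : ℤ, ∃ w ∈ W, t (k + 1) = t k + w.length ∧
      ∀ (i : ℕ) (h : i < w.length), x (t k + (i : ℤ)) = w.get ⟨i, h⟩

/-- The coded system generated by the word set `W`: the closure of the set of
free concatenations of words from `W`. -/
def codedSystem (W : Set (List Bool)) : Set Bin :=
  closure {x | IsFreeConcat W x}

/-- The generating set `W_n = {0^{2^n-1}1, 1^{2^n-1}0}`. -/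
def genWords (n : ℕ) : Set (List Bool) :=
  {List.replicate (2 ^ n - 1) false ++ [true], List.replicate (2 ^ n - 1) true ++ [false]}

/-- The subshift `X_n`, the coded system generated by `W_n`. -/
def Xsub (n : ℕ) : Set Bin := codedSystem (genWords n)

/-- The set of words of length `j` in the language of `Y ⊆ {0,1}^ℤ`. -/
def langWord (Y : Set Bin) (j : ℕ) : Set (Fin j → Bool) :=
  {w | ∃ x ∈ Y, ∀ i : Fin j, x ((i : ℕ) : ℤ) = w i}

/-! ### The metric and the potential -/

open Classical in
/-- The metric `d(x,y) = 2^{-inf{|n| : x_n ≠ y_n}}` on the shift space. -/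
def binDist (x y : Bin) : ℝ :=
  if x = y then 0
  else (1 / 2 : ℝ) ^ sInf {m : ℕ | ∃ i : ℤ, i.natAbs = m ∧ x i ≠ y i}

/-- Distance from a point to a set. -/
def distToSet (x : Bin) (S : Set Bin) : ℝ :=
  sInf ((fun y => binDist x y) '' S)

/-- `δ_j = (10 + 3 log₂ j)/(α j)`. -/
def deltaSeq (α : ℝ) (j : ℕ) : ℝ := (10 + 3 * Real.logb 2 j) / (α * j)

/-- The drop `δ` as a function of the distance `r`: if `r = 2^{-j}` this equals
`δ_j = (10 + 3 log₂ j)/(α j)`, and `δ = 0` when `r = 0` (i.e. `δ_∞ = 0`). -/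
def deltaOf (α : ℝ) (r : ℝ) : ℝ :=
  if r = 0 then 0
  else (10 + 3 * Real.logb 2 (-Real.logb 2 r)) / (α * (-Real.logb 2 r))

/-- `c_n = -∑_{j=n}^∞ 1/(2^{j+1} β_j)`. -/
def cseq (β : ℕ → ℝ) (n : ℕ) : ℝ :=
  -∑' k : ℕ, 1 / (2 ^ (n + k + 1) * β (n + k))

/-- `φ_n(x) = c_n − δ_j` when `dist(x, X_n) = 2^{-j}` (and `φ_n = c_n` on `X_n`). -/
def phiN (α : ℝ) (c : ℕ → ℝ) (n : ℕ) (x : Bin) : ℝ :=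
  c n - deltaOf α (distToSet x (Xsub n))

/-- The potential `φ = sup_{n ≥ 1} φ_n`. -/
def phi (α : ℝ) (c : ℕ → ℝ) (x : Bin) : ℝ :=
  ⨆ n : ℕ, phiN α c (n + 1) x

/-- The constants of the finite (truncated) construction:
`c_{n} = c_1 + ∑_{j=1}^{n-1} 1/(2^{j+1} β_j)`. -/
def cseqFin (c1 : ℝ) (β : ℕ → ℝ) (n : ℕ) : ℝ :=
  c1 + ∑ j ∈ Finset.Ico 1 n, 1 / (2 ^ (j + 1) * β j)

/-- The truncated potential `φ = max{φ_n : 1 ≤ n ≤ N+1}`. -/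
def phiFin (α : ℝ) (c : ℕ → ℝ) (N : ℕ) (x : Bin) : ℝ :=
  ⨆ n : Fin (N + 1), phiN α c ((n : ℕ) + 1) x

/-! ### Measures of maximal entropy and relative pressure -/

/-- `μ` is a measure of maximal entropy for the subsystem `Y` (a `T`-invariant
probability measure giving full mass to `Y` and maximizing entropy among such). -/
def IsMaxEntropyOn (Y : Set Bin) (μ : Measure Bin) : Prop :=
  InvProb shift μ ∧ μ Y = 1 ∧
    ∀ ν : Measure Bin, InvProb shift ν → ν Y = 1 → kolSinai shift ν ≤ kolSinai shift μ

/-- The topological pressure of the subsystem `Y` (computed via the variational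
principle over invariant measures giving full mass to `Y`). -/
def pressureOn (Y : Set Bin) (φ : Bin → ℝ) : ℝ :=
  ⨆ μ : {μ : Measure Bin // InvProb shift μ ∧ μ Y = 1},
    (kolSinai shift μ.1 + ∫ x, φ x ∂μ.1)

/-! ### The pin-sequence space -/

/-- `Y`, the closure of the union of the `X_n`, `n ≥ 1`. -/
def Yset : Set Bin := closure (⋃ n : ℕ, Xsub (n + 1))

/-- The word `x_i ⋯ x_j` belongs to the language of `Y`. -/
def SegIn (x : Bin) (i j : ℤ) (Y : Set Bin) : Prop :=
  ∃ y ∈ Y, ∀ m : ℤ, i ≤ m → m ≤ j → y (m - i) = x m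

/-- The word `x_0 ⋯ x_{j-1}` belongs to the language of `Y`. -/
def WordIn (x : Bin) (j : ℕ) (Y : Set Bin) : Prop :=
  ∃ y ∈ Y, ∀ m : ℕ, m < j → y (m : ℤ) = x (m : ℤ)

/-- The pin-sequence space `P ⊆ X × {0,1}^ℤ`: pinless stretches of `x` lie in the
language of `Y`, and stretches between two pins do not. -/
def PinSpace : Set (Bin × Bin) :=
  {p | (∀ i j : ℤ, i < j → (∀ k : ℤ, i < k → k ≤ j → p.2 k = false) → SegIn p.1 i j Yset) ∧
       (∀ i j : ℤ, i < j → p.2 i = true → p.2 j = true → ¬ SegIn p.1 i j Yset)}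

/-- The product shift `T̄(x,z) = (Tx, Tz)`. -/
def shift2 (p : Bin × Bin) : Bin × Bin := (shift p.1, shift p.2)

/-- The set `A = {(x,z) ∈ P : z_0 = 1}`. -/
def Aset : Set (Bin × Bin) := {p | p ∈ PinSpace ∧ p.2 0 = true}

/-- The first return time to `A`. -/
def retTime (p : Bin × Bin) : ℕ :=
  sInf {k : ℕ | 1 ≤ k ∧ shift2^[k] p ∈ Aset}

/-- The induced (first-return) map `T̄_A`. -/
def inducedMap (p : Bin × Bin) : Bin × Bin := shift2^[retTime p] p

/-- `Q_j`, the set of points of `A` with first return time `j`. -/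
def Qset (j : ℕ) : Set (Bin × Bin) := {p | p ∈ Aset ∧ retTime p = j}

/-- `Q_{j,s}` for `1 ≤ s ≤ ⌊log₂ j⌋ - 3`: points of `Q_j` whose initial block of
length `j` lies in the language of `X_s`; the class `s = 0` collects the blocks
belonging to some `X_{s'}` with `s' ≥ ⌊log₂ j⌋ - 2`. -/
def Qjs (j s : ℕ) : Set (Bin × Bin) :=
  if s = 0 then
    {p | p ∈ Qset j ∧ ∃ s' : ℕ, 1 ≤ s' ∧ Nat.log 2 j - 2 ≤ s' ∧ WordIn p.1 j (Xsub s')}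
  else {p | p ∈ Qset j ∧ WordIn p.1 j (Xsub s)}



/-! ### Auxiliary lemmas for Statement 11 -/

section Aux

lemma genWords_len {n : ℕ} {w : List Bool} (hw : w ∈ genWords n) : w.length = 2 ^ n := by
  have h1 : 1 ≤ 2 ^ n := Nat.one_le_two_pow
  rcases hw with h | h <;> subst h <;> simp <;> omega

lemma genWords_get {n : ℕ} {w : List Bool} (hw : w ∈ genWords n) :
    ∃ b : Bool, ∀ (i : ℕ) (h : i < w.length),
      w.get ⟨i, h⟩ = if i = 2 ^ n - 1 then !b else b := by
  have h1 : 1 ≤ 2 ^ n := Nat.one_le_two_pow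
  rcases hw with h | h <;> subst h
  · refine ⟨false, fun i hi => ?_⟩
    have hi' : i < 2 ^ n := by
      have := (by simpa using hi : i < (2^n - 1) + 1); omega
    rw [List.get_eq_getElem]
    rcases Nat.lt_or_ge i (2 ^ n - 1) with h2 | h2
    · rw [List.getElem_append_left (by simpa using h2)]
      simp [List.getElem_replicate]; omega
    · have : i = 2 ^ n - 1 := by omega
      subst this
      rw [List.getElem_append_right (by simp)]
      simp
  · refine ⟨true, fun i hi => ?_⟩
    have hi' : i < 2 ^ n := by
      have := (by simpa using hi : i < (2^n - 1) + 1); omega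
    rw [List.get_eq_getElem]
    rcases Nat.lt_or_ge i (2 ^ n - 1) with h2 | h2
    · rw [List.getElem_append_left (by simpa using h2)]
      simp [List.getElem_replicate]; omega
    · have : i = 2 ^ n - 1 := by omega
      subst this
      rw [List.getElem_append_right (by simp)]
      simp

/-- Normal form of a free concatenation of `genWords n`. -/
lemma concat_struct {n : ℕ} {x : Bin} (hx : IsFreeConcat (genWords n) x) :
    ∃ t0 : ℤ, ∃ b : ℤ → Bool, ∀ (k : ℤ) (i : ℕ), i < 2 ^ n →
      x (t0 + k * 2 ^ n + (i : ℤ)) = if i = 2 ^ n - 1 then !(b k) else b k := by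
  obtain ⟨t, -, -, -, hw⟩ := hx
  have hstep : ∀ k : ℤ, t (k + 1) = t k + 2 ^ n := by
    intro k
    obtain ⟨w, hwmem, hlen, -⟩ := hw k
    rw [hlen, genWords_len hwmem]; push_cast; ring
  have hlin : ∀ k : ℤ, t k = t 0 + k * 2 ^ n := by
    intro k
    induction k using Int.induction_on with
    | zero => simp
    | succ k ih => rw [hstep k, ih]; ring
    | pred k ih =>
        have h := hstep (-(k:ℤ) - 1)
        rw [show (-(k:ℤ) - 1) + 1 = -(k:ℤ) by ring, ih] at h
        have h2 : t (-(k:ℤ) - 1) = t 0 + (-(k:ℤ)) * 2 ^ n - 2 ^ n := by omega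
        rw [h2]; ring
  choose w hwmem hlen hval using hw
  choose b hb using fun k => genWords_get (hwmem k)
  refine ⟨t 0, b, fun k i hi => ?_⟩
  have hi' : i < (w k).length := by rw [genWords_len (hwmem k)]; exact hi
  have h := hval k i hi'
  rw [hlin k] at h
  rw [h, hb k i hi']

/-- Every position lies in a block. -/
lemma pos_in_block (t0 : ℤ) (q : ℕ) (hq : 0 < q) (p : ℤ) :
    ∃ (k : ℤ) (o : ℕ), o < q ∧ p = t0 + k * q + (o : ℤ) := by
  refine ⟨(p - t0) / q, ((p - t0) % q).toNat, ?_, ?_⟩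
  · have h1 : (p - t0) % q < q := Int.emod_lt_of_pos _ (by exact_mod_cast hq)
    have h2 : 0 ≤ (p - t0) % q := Int.emod_nonneg _ (by positivity)
    omega
  · have h2 : 0 ≤ (p - t0) % q := Int.emod_nonneg _ (by positivity)
    rw [Int.toNat_of_nonneg h2]
    have h3 := Int.mul_ediv_add_emod (p - t0) (q : ℤ)
    linarith [mul_comm ((p - t0) / (q:ℤ)) (q:ℤ)]

lemma yContra {m : ℕ} {y : Bin} (hy : IsFreeConcat (genWords m) y) (q : ℕ)
    (hq2 : 2 ≤ q) (hqQ : q + 2 ≤ 2 ^ m) (p : ℤ)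
    (h1 : y (p - 1) ≠ y p) (h2 : y (p + q) ≠ y (p + 1)) : False := by
  obtain ⟨t0, b, E0⟩ := concat_struct hy
  set Q : ℕ := 2 ^ m with hQdef
  have hQZ : ((Q : ℕ) : ℤ) = (2 : ℤ) ^ m := by rw [hQdef]; push_cast; ring
  have E : ∀ (k : ℤ) (i : ℕ), i < Q → y (t0 + k * (Q : ℤ) + (i : ℤ)) =
      if i = Q - 1 then !(b k) else b k := by
    intro k i hi; rw [hQZ]; exact E0 k i hi
  have hQ4 : 4 ≤ Q := by omega
  obtain ⟨k, o, ho, hp⟩ := pos_in_block t0 Q (by omega) p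
  by_cases ho1 : o = Q - 1
  · have e1 : p + 1 = t0 + (k + 1) * (Q : ℤ) + ((0 : ℕ) : ℤ) := by
      rw [hp]; have : ((o : ℤ)) = (Q : ℤ) - 1 := by omega
      rw [this]; push_cast; ring
    have e2 : p + (q : ℤ) = t0 + (k + 1) * (Q : ℤ) + ((q - 1 : ℕ) : ℤ) := by
      rw [hp]; have h3 : ((o : ℤ)) = (Q : ℤ) - 1 := by omega
      have h4 : ((q - 1 : ℕ) : ℤ) = (q : ℤ) - 1 := by omega
      rw [h3, h4]; push_cast; ring
    have v1 : y (p + 1) = b (k + 1) := by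
      rw [e1, E (k + 1) 0 (by omega)]; have : ¬ ((0:ℕ) = Q - 1) := by omega
      simp [this]
    have v2 : y (p + (q : ℤ)) = b (k + 1) := by
      rw [e2, E (k + 1) (q - 1) (by omega)]
      have : ¬ (q - 1 = Q - 1) := by omega
      simp [this]
    exact h2 (by rw [v1, v2])
  · by_cases ho0 : o = 0
    · have e1 : p + 1 = t0 + k * (Q : ℤ) + ((1 : ℕ) : ℤ) := by
        rw [hp]; have : ((o : ℤ)) = 0 := by omega
        rw [this]; push_cast; ring
      have e2 : p + (q : ℤ) = t0 + k * (Q : ℤ) + ((q : ℕ) : ℤ) := by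
        rw [hp]; have : ((o : ℤ)) = 0 := by omega
        rw [this]; push_cast; ring
      have v1 : y (p + 1) = b k := by
        rw [e1, E k 1 (by omega)]
        have : ¬ ((1:ℕ) = Q - 1) := by omega
        simp [this]
      have v2 : y (p + (q : ℤ)) = b k := by
        rw [e2, E k q (by omega)]
        have : ¬ (q = Q - 1) := by omega
        simp [this]
      exact h2 (by rw [v1, v2])
    · have e1 : p - 1 = t0 + k * (Q : ℤ) + ((o - 1 : ℕ) : ℤ) := by
        rw [hp]; have : ((o - 1 : ℕ) : ℤ) = (o : ℤ) - 1 := by omega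
        rw [this]; ring
      have v1 : y (p - 1) = b k := by
        rw [e1, E k (o - 1) (by omega)]
        have : ¬ (o - 1 = Q - 1) := by omega
        simp [this]
      have v2 : y p = b k := by
        rw [hp, show (↑Q : ℤ) = ((Q:ℕ):ℤ) from rfl, E k o (by omega)]
        simp [ho1]
      exact h1 (by rw [v1, v2])

lemma xPattern {n : ℕ} (hn : 1 ≤ n) {x : Bin} (hx : IsFreeConcat (genWords n) x) :
    ∃ p : ℤ, (p - 1).natAbs ≤ 2 ^ (n + 2) ∧ (p + ((2 ^ n : ℕ) : ℤ)).natAbs ≤ 2 ^ (n + 2) ∧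
      p.natAbs ≤ 2 ^ (n + 2) ∧ (p + 1).natAbs ≤ 2 ^ (n + 2) ∧
      x (p - 1) ≠ x p ∧ x (p + ((2 ^ n : ℕ) : ℤ)) ≠ x (p + 1) := by
  obtain ⟨t0, b, E0⟩ := concat_struct hx
  set q : ℕ := 2 ^ n with hqdef
  have hqZ : ((q : ℕ) : ℤ) = (2 : ℤ) ^ n := by rw [hqdef]; push_cast; ring
  have E : ∀ (k : ℤ) (i : ℕ), i < q → x (t0 + k * (q : ℤ) + (i : ℤ)) =
      if i = q - 1 then !(b k) else b k := by
    intro k i hi; rw [hqZ]; exact E0 k i hi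
  have hq2 : 2 ≤ q := by
    have : 2 ^ 1 ≤ 2 ^ n := Nat.pow_le_pow_right (by norm_num) hn
    simpa [hqdef] using this
  have hL : (2 : ℕ) ^ (n + 2) = 4 * q := by rw [hqdef]; ring
  obtain ⟨k, o, ho, h0⟩ := pos_in_block t0 q (by omega) 0
  set J : ℤ := t0 + k * q with hJ
  have hJo : J = -(o : ℤ) := by omega
  refine ⟨J - 1, by omega, by omega, by omega, by omega, ?_, ?_⟩
  · have e1 : J - 1 - 1 = t0 + (k - 1) * (q : ℤ) + ((q - 2 : ℕ) : ℤ) := by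
      rw [hJ] at *; have : ((q - 2 : ℕ) : ℤ) = (q : ℤ) - 2 := by omega
      rw [this]; ring
    have e2 : J - 1 = t0 + (k - 1) * (q : ℤ) + ((q - 1 : ℕ) : ℤ) := by
      rw [hJ] at *; have : ((q - 1 : ℕ) : ℤ) = (q : ℤ) - 1 := by omega
      rw [this]; ring
    have v1 : x (J - 1 - 1) = b (k - 1) := by
      rw [e1, E (k - 1) (q - 2) (by omega)]
      have : ¬ (q - 2 = q - 1) := by omega
      simp [this]
    have v2 : x (J - 1) = !(b (k - 1)) := by
      rw [e2, E (k - 1) (q - 1) (by omega)]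
      simp
    rw [v1, v2]; simp
  · have e1 : J - 1 + (q : ℤ) = t0 + k * (q : ℤ) + ((q - 1 : ℕ) : ℤ) := by
      rw [hJ] at *; have : ((q - 1 : ℕ) : ℤ) = (q : ℤ) - 1 := by omega
      rw [this]; ring
    have e2 : J - 1 + 1 = t0 + k * (q : ℤ) + ((0 : ℕ) : ℤ) := by
      rw [hJ] at *; push_cast; ring
    have v1 : x (J - 1 + (q : ℤ)) = !(b k) := by
      rw [e1, E k (q - 1) (by omega)]
      simp
    have v2 : x (J - 1 + 1) = b k := by
      rw [e2, E k 0 (by omega)]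
      have : ¬ ((0 : ℕ) = q - 1) := by omega
      simp [this]
    rw [v1, v2]; simp

/-- the periodic point with bit `c` at 0. -/
def perPoint (n : ℕ) (c : Bool) : Bin :=
  fun i => if i % ((2 ^ n : ℕ) : ℤ) = ((2 ^ n : ℕ) : ℤ) - 1 then !c else c

lemma perPoint_concat {n : ℕ} (hn : 1 ≤ n) (c : Bool) :
    IsFreeConcat (genWords n) (perPoint n c) := by
  set q : ℕ := 2 ^ n with hqdef
  have hq2 : 2 ≤ q := by
    have : 2 ^ 1 ≤ 2 ^ n := Nat.pow_le_pow_right (by norm_num) hn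
    simpa [hqdef] using this
  refine ⟨fun k => k * q, ?_, ?_, ?_, ?_⟩
  · intro a b hab
    have : (0:ℤ) < (q:ℤ) := by exact_mod_cast (by omega : 0 < q)
    exact mul_lt_mul_of_pos_right hab this
  · intro N
    refine ⟨N.natAbs + 1, ?_⟩
    show N < ((N.natAbs : ℤ) + 1) * (q : ℤ)
    have h1 : (N : ℤ) ≤ N.natAbs := Int.le_natAbs
    have h2 : (1:ℤ) ≤ (q:ℤ) := by exact_mod_cast Nat.one_le_of_lt hq2
    nlinarith [(by positivity : (0:ℤ) ≤ (N.natAbs : ℤ))]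
  · intro N
    refine ⟨-((N.natAbs : ℤ) + 1), ?_⟩
    show (-((N.natAbs : ℤ) + 1)) * (q : ℤ) < N
    have h1 : -(N.natAbs : ℤ) ≤ N := by omega
    have h2 : (1:ℤ) ≤ (q:ℤ) := by exact_mod_cast Nat.one_le_of_lt hq2
    nlinarith [(by positivity : (0:ℤ) ≤ (N.natAbs : ℤ))]
  · intro k
    refine ⟨List.replicate (q - 1) c ++ [!c], ?_, ?_, ?_⟩
    · cases c
      · exact Or.inl rfl
      · exact Or.inr rfl
    · have : (List.replicate (q - 1) c ++ [!c]).length = q := by simp; omega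
      rw [this]; push_cast; ring
    · intro i hi
      have hlen : (List.replicate (q - 1) c ++ [!c]).length = q := by simp; omega
      have hiq : i < q := by rwa [hlen] at hi
      have hmod : (k * (q:ℤ) + (i:ℤ)) % (q:ℤ) = (i:ℤ) := by
        rw [add_comm, mul_comm, Int.add_mul_emod_self_left]
        exact Int.emod_eq_of_lt (by positivity) (by exact_mod_cast hiq)
      show (if (k * (q:ℤ) + (i:ℤ)) % ((2^n : ℕ) : ℤ) = ((2^n : ℕ):ℤ) - 1 then !c else c) = _
      rw [show ((2^n : ℕ) : ℤ) = (q:ℤ) from by rw [hqdef], hmod]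
      rw [List.get_eq_getElem]
      rcases Nat.lt_or_ge i (q - 1) with h2 | h2
      · rw [List.getElem_append_left (by simpa using h2)]
        have : ¬ ((i:ℤ) = (q:ℤ) - 1) := by omega
        simp [this]
      · have : i = q - 1 := by omega
        subst this
        rw [List.getElem_append_right (by simp)]
        have : ((q - 1 : ℕ) : ℤ) = (q:ℤ) - 1 := by omega
        simp [this]

lemma perPoint_mem {n : ℕ} (hn : 1 ≤ n) (c : Bool) : perPoint n c ∈ Xsub n :=
  subset_closure (perPoint_concat hn c)

lemma perPoint_zero {n : ℕ} (hn : 1 ≤ n) (c : Bool) : perPoint n c 0 = c := by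
  have hq2 : 2 ≤ 2 ^ n := by
    have : 2 ^ 1 ≤ 2 ^ n := Nat.pow_le_pow_right (by norm_num) hn
    simpa using this
  unfold perPoint
  have h0 : (0:ℤ) % ((2^n : ℕ) : ℤ) = 0 := by simp
  rw [h0]
  have h1 : ¬ ((0:ℤ) = ((2^n : ℕ):ℤ) - 1) := by omega
  rw [if_neg h1]

/-- window extraction from closure -/
lemma closure_window {S : Set Bin} {z : Bin} (hz : z ∈ closure S) (L : ℕ) :
    ∃ z' ∈ S, ∀ i : ℤ, i.natAbs ≤ L → z' i = z i := by
  have hop : IsOpen {w : Bin | ∀ i ∈ Finset.Icc (-(L:ℤ)) L, w i = z i} := by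
    have he : {w : Bin | ∀ i ∈ Finset.Icc (-(L:ℤ)) L, w i = z i}
        = ⋂ i ∈ Finset.Icc (-(L:ℤ)) L, (fun w : Bin => w i) ⁻¹' {z i} := by
      ext w; simp [Set.mem_iInter]
    rw [he]
    exact isOpen_biInter_finset fun i _ =>
      (continuous_apply i).isOpen_preimage _ (isOpen_discrete _)
  obtain ⟨z', hz'U, hz'S⟩ := mem_closure_iff.mp hz _ hop (fun i _ => rfl)
  exact ⟨z', hz'S, fun i hi => hz'U i (by simp [Finset.mem_Icc]; omega)⟩

/-- Points of `Xsub n` and `Xsub m` differ in the window of radius `2^(n+2)`. -/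
lemma far_apart {n m : ℕ} (hn : 1 ≤ n) (hnm : n < m) {x y : Bin}
    (hx : x ∈ Xsub n) (hy : y ∈ Xsub m) :
    ∃ i : ℤ, i.natAbs ≤ 2 ^ (n + 2) ∧ x i ≠ y i := by
  obtain ⟨x', hx'c, hx'w⟩ := closure_window hx (2 ^ (n + 2))
  obtain ⟨y', hy'c, hy'w⟩ := closure_window hy (2 ^ (n + 2))
  obtain ⟨p, h1, h2, h3, h4, hv1, hv2⟩ := xPattern hn hx'c
  by_contra hc
  push_neg at hc
  have hqQ : 2 ^ n + 2 ≤ 2 ^ m := by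
    have ha : 2 ^ (n + 1) ≤ 2 ^ m := Nat.pow_le_pow_right (by norm_num) (by omega)
    have hb : (2:ℕ) ^ (n + 1) = 2 * 2 ^ n := by ring
    have hc2 : 2 ≤ 2 ^ n := by
      have : 2 ^ 1 ≤ 2 ^ n := Nat.pow_le_pow_right (by norm_num) hn
      simpa using this
    omega
  have hq2 : 2 ≤ 2 ^ n := by
    have : 2 ^ 1 ≤ 2 ^ n := Nat.pow_le_pow_right (by norm_num) hn
    simpa using this
  apply yContra hy'c (2 ^ n) hq2 hqQ p
  · rw [hy'w _ h1, hy'w _ h3, ← hc _ h1, ← hc _ h3, ← hx'w _ h1, ← hx'w _ h3]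
    exact hv1
  · rw [hy'w _ h2, hy'w _ h4, ← hc _ h2, ← hc _ h4, ← hx'w _ h2, ← hx'w _ h4]
    exact hv2

lemma binDist_nonneg (x y : Bin) : 0 ≤ binDist x y := by
  unfold binDist; split
  · exact le_refl 0
  · positivity

lemma binDist_self (x : Bin) : binDist x x = 0 := by simp [binDist]

lemma binDist_le_half {x y : Bin} (h : x 0 = y 0) : binDist x y ≤ 1 / 2 := by
  unfold binDist; split
  · norm_num
  · rename_i hxy
    set D := {m : ℕ | ∃ i : ℤ, i.natAbs = m ∧ x i ≠ y i} with hD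
    have hne : D.Nonempty := by
      have : ∃ i, x i ≠ y i := by
        by_contra hc; push_neg at hc; exact hxy (funext hc)
      obtain ⟨i, hi⟩ := this
      exact ⟨i.natAbs, i, rfl, hi⟩
    have h0 : 0 ∉ D := by
      rintro ⟨i, hi0, hi⟩
      have : i = 0 := by omega
      exact hi (by rw [this, h])
    have h1 : 1 ≤ sInf D := by
      rcases Nat.eq_zero_or_pos (sInf D) with hz | hp
      · exact absurd (hz ▸ Nat.sInf_mem hne) h0
      · exact hp
    calc (1/2 : ℝ) ^ sInf D ≤ (1/2 : ℝ) ^ 1 :=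
          pow_le_pow_of_le_one (by norm_num) (by norm_num) h1
      _ = 1/2 := by norm_num

lemma binDist_ge {x y : Bin} {L : ℕ} (h : ∃ i : ℤ, i.natAbs ≤ L ∧ x i ≠ y i) :
    (1/2 : ℝ) ^ L ≤ binDist x y := by
  obtain ⟨i, hiL, hi⟩ := h
  have hxy : x ≠ y := fun he => hi (by rw [he])
  unfold binDist
  rw [if_neg hxy]
  have hmem : i.natAbs ∈ {m : ℕ | ∃ i : ℤ, i.natAbs = m ∧ x i ≠ y i} := ⟨i, rfl, hi⟩
  have : sInf {m : ℕ | ∃ i : ℤ, i.natAbs = m ∧ x i ≠ y i} ≤ L :=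
    le_trans (Nat.sInf_le hmem) hiL
  exact pow_le_pow_of_le_one (by norm_num) (by norm_num) this

lemma neg_logb_ge_one {r : ℝ} (hr : 0 < r) (h2 : r ≤ 1/2) : 1 ≤ -Real.logb 2 r := by
  have h := Real.logb_le_logb_of_le (b := 2) (by norm_num) hr h2
  have hhalf : Real.logb 2 (1/2 : ℝ) = -1 := by
    rw [show (1/2 : ℝ) = 2⁻¹ by norm_num, Real.logb_inv]
    rw [Real.logb_self_eq_one] <;> norm_num
  linarith [hhalf ▸ h]

lemma deltaOf_nonneg {α r : ℝ} (hα : 0 < α) (h0 : 0 ≤ r) (h2 : r ≤ 1/2) : 0 ≤ deltaOf α r := by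
  unfold deltaOf; split
  · exact le_refl 0
  · rename_i hr0
    have hrpos : 0 < r := lt_of_le_of_ne h0 (Ne.symm hr0)
    have hj : 1 ≤ -Real.logb 2 r := neg_logb_ge_one hrpos h2
    have hnum : 0 ≤ 10 + 3 * Real.logb 2 (-Real.logb 2 r) := by
      have := Real.logb_nonneg (by norm_num : (1:ℝ) < 2) hj
      linarith
    have hden : 0 < α * (-Real.logb 2 r) := by nlinarith
    positivity

/-- main lower bound for `deltaOf` on `[2^{-L}, 1/2]`. -/
lemma deltaOf_ge {α r : ℝ} {L : ℕ} (hα : 0 < α) (hL : 1 ≤ L)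
    (hr1 : (1/2 : ℝ) ^ L ≤ r) (h2 : r ≤ 1/2) :
    10 / (α * L) ≤ deltaOf α r := by
  have hrpos : 0 < r := lt_of_lt_of_le (by positivity) hr1
  have hj1 : 1 ≤ -Real.logb 2 r := neg_logb_ge_one hrpos h2
  have hjL : -Real.logb 2 r ≤ L := by
    have h := Real.logb_le_logb_of_le (b := 2) (by norm_num) (by positivity) hr1
    have hpow : Real.logb 2 ((1/2 : ℝ) ^ L) = -(L : ℝ) := by
      rw [show (1/2 : ℝ) = 2⁻¹ by norm_num, inv_pow, Real.logb_inv,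
        ← Real.rpow_natCast, Real.logb_rpow (by norm_num)]
      norm_num
    rw [hpow] at h; linarith
  unfold deltaOf
  rw [if_neg (ne_of_gt hrpos)]
  have hnum : (10 : ℝ) ≤ 10 + 3 * Real.logb 2 (-Real.logb 2 r) := by
    have := Real.logb_nonneg (by norm_num : (1:ℝ) < 2) hj1
    linarith
  have hLpos : (0:ℝ) < (L:ℝ) := by exact_mod_cast hL
  have hd1 : 0 < α * (-Real.logb 2 r) := by nlinarith
  calc 10 / (α * L) ≤ 10 / (α * (-Real.logb 2 r)) := by
        apply div_le_div_of_nonneg_left (by norm_num) hd1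
        nlinarith
    _ ≤ (10 + 3 * Real.logb 2 (-Real.logb 2 r)) / (α * (-Real.logb 2 r)) := by
        exact (div_le_div_iff_of_pos_right hd1).mpr hnum

section Cseq

variable {β : ℕ → ℝ}

lemma beta_ge (hpos : ∀ n : ℕ, 1 ≤ n → 0 < β n)
    (hmono : ∀ m n : ℕ, 1 ≤ m → m < n → β m < β n) (a : ℕ) (ha : 1 ≤ a) : β 1 ≤ β a := by
  rcases Nat.eq_or_lt_of_le ha with h | h
  · rw [← h]
  · exact (hmono 1 a le_rfl h).le

lemma term_nonneg (hpos : ∀ n : ℕ, 1 ≤ n → 0 < β n) (a k : ℕ) (ha : 1 ≤ a) :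
    0 ≤ 1 / (2 ^ (a + k + 1) * β (a + k)) := by
  have := hpos (a + k) (by omega)
  positivity

lemma term_le (hpos : ∀ n : ℕ, 1 ≤ n → 0 < β n)
    (hmono : ∀ m n : ℕ, 1 ≤ m → m < n → β m < β n) (a k : ℕ) (ha : 1 ≤ a) :
    1 / (2 ^ (a + k + 1) * β (a + k)) ≤ (1 / β 1) * (1 / 2 : ℝ) ^ (a + k + 1) := by
  have h1 : 0 < β 1 := hpos 1 le_rfl
  have h2 : β 1 ≤ β (a + k) := beta_ge hpos hmono (a + k) (by omega)
  have h3 : 0 < β (a + k) := lt_of_lt_of_le h1 h2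
  have key : (1 / β 1) * ((1:ℝ)/2) ^ (a + k + 1) = 1 / (2 ^ (a + k + 1) * β 1) := by
    rw [div_pow, one_pow, div_mul_div_comm, one_mul, mul_comm]
  rw [key]
  apply one_div_le_one_div_of_le (by positivity)
  have hp : (0:ℝ) < 2 ^ (a + k + 1) := by positivity
  nlinarith

lemma summable_geo (a : ℕ) : Summable (fun k : ℕ => (1 / β 1) * (1 / 2 : ℝ) ^ (a + k + 1)) := by
  apply Summable.mul_left
  have h : Summable (fun k : ℕ => (1 / 2 : ℝ) ^ k) :=
    summable_geometric_of_lt_one (by norm_num) (by norm_num)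
  have := h.mul_left ((1/2:ℝ)^(a+1))
  apply this.congr
  intro k
  rw [← pow_add]
  congr 1
  omega

lemma geo_sum (a : ℕ) : ∑' k : ℕ, (1 / β 1) * (1 / 2 : ℝ) ^ (a + k + 1)
    = (1 / β 1) * (1 / 2 : ℝ) ^ a := by
  rw [tsum_mul_left]
  congr 1
  have h : ∀ k : ℕ, (1/2 : ℝ) ^ (a + k + 1) = (1/2:ℝ)^(a+1) * (1/2:ℝ)^k := by
    intro k; rw [← pow_add]; congr 1; omega
  rw [tsum_congr h, tsum_mul_left, tsum_geometric_of_lt_one (by norm_num) (by norm_num)]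
  rw [pow_succ]
  ring

lemma summable_cseq (hpos : ∀ n : ℕ, 1 ≤ n → 0 < β n)
    (hmono : ∀ m n : ℕ, 1 ≤ m → m < n → β m < β n) (a : ℕ) (ha : 1 ≤ a) :
    Summable (fun k : ℕ => 1 / (2 ^ (a + k + 1) * β (a + k))) :=
  Summable.of_nonneg_of_le (term_nonneg hpos a · ha) (term_le hpos hmono a · ha) (summable_geo a)

lemma cseq_nonpos (hpos : ∀ n : ℕ, 1 ≤ n → 0 < β n) (a : ℕ) (ha : 1 ≤ a) : cseq β a ≤ 0 := by
  unfold cseq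
  simp only [neg_nonpos]
  exact tsum_nonneg (term_nonneg hpos a · ha)

lemma neg_cseq_le (hpos : ∀ n : ℕ, 1 ≤ n → 0 < β n)
    (hmono : ∀ m n : ℕ, 1 ≤ m → m < n → β m < β n) (a : ℕ) (ha : 1 ≤ a) :
    -cseq β a ≤ (1 / β 1) * (1 / 2 : ℝ) ^ a := by
  unfold cseq
  rw [neg_neg, ← geo_sum a]
  exact Summable.tsum_le_tsum (term_le hpos hmono a · ha) (summable_cseq hpos hmono a ha) (summable_geo a)

lemma cseq_mono (hpos : ∀ n : ℕ, 1 ≤ n → 0 < β n)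
    (hmono : ∀ m n : ℕ, 1 ≤ m → m < n → β m < β n) (a b : ℕ) (ha : 1 ≤ a) (hab : a ≤ b) :
    cseq β a ≤ cseq β b := by
  unfold cseq
  simp only [neg_le_neg_iff]
  apply (summable_cseq hpos hmono b (le_trans ha hab)).tsum_le_tsum_of_inj (fun k => k + (b - a))
    (fun u v huv => by simp only [] at huv; omega)
  · intro c _; exact term_nonneg hpos a c ha
  · intro k
    show 1 / (2 ^ (b + k + 1) * β (b + k)) ≤
      1 / (2 ^ (a + (k + (b - a)) + 1) * β (a + (k + (b - a))))
    rw [show a + (k + (b - a)) = b + k by omega]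
  · exact summable_cseq hpos hmono a ha

end Cseq

end Aux

/-- `φ` restricted to `X_n` is constantly `c_n`. -/
theorem phi_eq_on_Xsub (α : ℝ) (β : ℕ → ℝ) (hα : 0 < α) (hαβ : α < β 1)
    (hpos : ∀ n : ℕ, 1 ≤ n → 0 < β n)
    (hmono : ∀ m n : ℕ, 1 ≤ m → m < n → β m < β n)
    (n : ℕ) (hn : 1 ≤ n) (x : Bin) (hx : x ∈ Xsub n) :
    phi α (cseq β) x = cseq β n := by
  classical
  set c : ℕ → ℝ := cseq β with hc
  set L : ℕ := 2 ^ (n + 2) with hLdef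
  have hL1 : 1 ≤ L := Nat.one_le_two_pow
  have hq2 : 2 ≤ 2 ^ n := by
    have : 2 ^ 1 ≤ 2 ^ n := Nat.pow_le_pow_right (by norm_num) hn
    simpa using this
  have hβ1 : 0 < β 1 := hpos 1 le_rfl
  -- distance to own subshift is 0
  have hbdd : ∀ m : ℕ, BddBelow ((fun y => binDist x y) '' Xsub m) := by
    intro m
    exact ⟨0, by rintro _ ⟨y, -, rfl⟩; exact binDist_nonneg x y⟩
  have hself : distToSet x (Xsub n) = 0 := by
    unfold distToSet
    apply le_antisymm
    · exact csInf_le (hbdd n) ⟨x, hx, binDist_self x⟩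
    · apply Real.sInf_nonneg
      rintro _ ⟨y, -, rfl⟩; exact binDist_nonneg x y
  -- upper bound: r_m ≤ 1/2 for all m ≥ 1
  have hhalf : ∀ m : ℕ, 1 ≤ m → distToSet x (Xsub m) ≤ 1 / 2 := by
    intro m hm
    unfold distToSet
    have hy : perPoint m (x 0) ∈ Xsub m := perPoint_mem hm (x 0)
    calc sInf ((fun y => binDist x y) '' Xsub m) ≤ binDist x (perPoint m (x 0)) :=
          csInf_le (hbdd m) ⟨perPoint m (x 0), hy, rfl⟩
      _ ≤ 1 / 2 := binDist_le_half (by rw [perPoint_zero hm (x 0)])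
  have hr0 : ∀ m : ℕ, 0 ≤ distToSet x (Xsub m) := by
    intro m
    apply Real.sInf_nonneg
    rintro _ ⟨y, -, rfl⟩; exact binDist_nonneg x y
  -- key upper bound on each φ_m
  have hkey : ∀ m : ℕ, 1 ≤ m → phiN α c m x ≤ c n := by
    intro m hm
    rcases le_or_gt m n with hmn | hnm
    · -- small m : φ_m ≤ c_m ≤ c_n
      have h1 : 0 ≤ deltaOf α (distToSet x (Xsub m)) :=
        deltaOf_nonneg hα (hr0 m) (hhalf m hm)
      have h2 : c m ≤ c n := cseq_mono hpos hmono m n hm hmn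
      unfold phiN
      linarith
    · -- large m : distance is bounded below
      have hfar : (1/2 : ℝ) ^ L ≤ distToSet x (Xsub m) := by
        unfold distToSet
        have hne : ((fun y => binDist x y) '' Xsub m).Nonempty :=
          ⟨binDist x (perPoint m (x 0)), ⟨perPoint m (x 0), perPoint_mem hm (x 0), rfl⟩⟩
        apply le_csInf hne
        rintro _ ⟨y, hy, rfl⟩
        exact binDist_ge (far_apart hn hnm hx hy)
      have hδ : 10 / (α * L) ≤ deltaOf α (distToSet x (Xsub m)) :=
        deltaOf_ge hα hL1 hfar (hhalf m hm)
      have hcm : c m ≤ 0 := cseq_nonpos hpos m hm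
      have hcn : -c n ≤ (1 / β 1) * (1 / 2 : ℝ) ^ n := neg_cseq_le hpos hmono n hn
      have hcn' : -c n ≤ (1 / α) * (1 / 2 : ℝ) ^ n := by
        have hp : (0:ℝ) < (1/2:ℝ) ^ n := by positivity
        have : (1 / β 1) * (1 / 2 : ℝ) ^ n ≤ (1 / α) * (1 / 2 : ℝ) ^ n := by
          apply mul_le_mul_of_nonneg_right _ hp.le
          apply one_div_le_one_div_of_le hα hαβ.le
        linarith
      have hLr : ((L : ℕ) : ℝ) = 4 * 2 ^ n := by
        rw [hLdef]; push_cast; ring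
      have hgap : (1 / α) * (1 / 2 : ℝ) ^ n ≤ 10 / (α * L) := by
        rw [hLr]
        have hpow : ((1:ℝ)/2) ^ n = 1 / 2 ^ n := by rw [div_pow, one_pow]
        rw [hpow, div_mul_div_comm, one_mul]
        rw [div_le_div_iff₀ (by positivity) (by positivity)]
        have hp : (0:ℝ) < 2 ^ n := by positivity
        nlinarith
      unfold phiN
      linarith
  -- now compute the sup
  have hterm : phiN α c n x = c n := by
    unfold phiN
    rw [hself]
    simp [deltaOf]
  have hub : ∀ k : ℕ, phiN α c (k + 1) x ≤ c n := fun k => hkey (k + 1) (by omega)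
  have hbd : BddAbove (Set.range fun k : ℕ => phiN α c (k + 1) x) :=
    ⟨c n, by rintro _ ⟨k, rfl⟩; exact hub k⟩
  unfold phi
  apply le_antisymm
  · exact ciSup_le hub
  · have := le_ciSup hbd (n - 1)
    rw [show n - 1 + 1 = n by omega, hterm] at this
    exact this

end PhaseTransitions
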